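/- Let m ≥ 2, n = 2^{m+1} - 4, and let J_n ⊆ ℤ/2[w2,w3] be the ideal generated by g_{n+1}, g_{n+2}, g_{n+3}, where g_r = Σ_{r/3 ≤ s ≤ r/2} C(s,3s-r) w2^{3s-r} w3^{r-2s}. Then the cup-length of the quotient ring R = ℤ/2[w2,w3]/J_n (with augmentation ideal generated by w2, w3) equals n; that is, there exist n elements of the augmentation ideal with nonzero product, but any product of n+1 elements of the augmentation ideal is zero. -/

import Mathlib

open MvPolynomial

/-- The generator `g_r = Σ_{r/3 ≤ s ≤ r/2} C(s, 3s-r) w2^(3s-r) w3^(r-2s)`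
in `ℤ/2[w2, w3]` (`X 0 = w2`, `X 1 = w3`). -/
noncomputable def gGen (r : ℕ) : MvPolynomial (Fin 2) (ZMod 2) :=
  ∑ s ∈ Finset.Icc ((r + 2) / 3) (r / 2),
    (Nat.choose s (3 * s - r) : ZMod 2) • (X 0 ^ (3 * s - r) * X 1 ^ (r - 2 * s))

/-- The ideal `J_n = (g_{n+1}, g_{n+2}, g_{n+3})`. -/
noncomputable def Jideal (n : ℕ) : Ideal (MvPolynomial (Fin 2) (ZMod 2)) :=
  Ideal.span {gGen (n + 1), gGen (n + 2), gGen (n + 3)}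

/-- The quotient ring `R = ℤ/2[w2, w3]/J_n`. -/
noncomputable abbrev Rquot (n : ℕ) := MvPolynomial (Fin 2) (ZMod 2) ⧸ Jideal n

/-- The augmentation ideal of `R`, generated by (the classes of) `w2, w3`. -/
noncomputable def augIdeal (n : ℕ) : Ideal (Rquot n) :=
  Ideal.span {Ideal.Quotient.mk (Jideal n) (X 0), Ideal.Quotient.mk (Jideal n) (X 1)}

namespace CupAux

abbrev A := MvPolynomial (Fin 2) (ZMod 2)

lemma fin2_ext {d e : Fin 2 →₀ ℕ} (h0 : d 0 = e 0) (h1 : d 1 = e 1) : d = e := by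
  ext i; fin_cases i <;> assumption

lemma coeff_gGen (r : ℕ) (d : Fin 2 →₀ ℕ) :
    coeff d (gGen r) =
      if 2 * d 0 + 3 * d 1 = r then (Nat.choose (d 0 + d 1) (d 0) : ZMod 2) else 0 := by
  rw [gGen, coeff_sum]
  have hterm : ∀ s, coeff d ((Nat.choose s (3 * s - r) : ZMod 2) •
      (X (0 : Fin 2) ^ (3 * s - r) * X 1 ^ (r - 2 * s)))
      = (Nat.choose s (3 * s - r) : ZMod 2) *
        (if Finsupp.single 0 (3 * s - r) + Finsupp.single 1 (r - 2 * s) = d then 1 else 0) := by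
    intro s
    rw [coeff_smul, X_pow_eq_monomial, X_pow_eq_monomial, monomial_mul, coeff_monomial]
    simp [smul_eq_mul]
  simp only [hterm]
  by_cases h : 2 * d 0 + 3 * d 1 = r
  · rw [if_pos h]
    rw [Finset.sum_eq_single (d 0 + d 1)]
    · have h3 : 3 * (d 0 + d 1) - r = d 0 := by omega
      have h2 : r - 2 * (d 0 + d 1) = d 1 := by omega
      rw [h3, h2, if_pos, mul_one]
      apply fin2_ext <;> simp
    · intro s hs hne
      rw [Finset.mem_Icc] at hs
      rw [if_neg, mul_zero]
      intro hc
      have hc0 := DFunLike.congr_fun hc 0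
      have hc1 := DFunLike.congr_fun hc 1
      simp [Finsupp.single_apply] at hc0 hc1
      omega
    · intro hni
      exfalso
      apply hni
      rw [Finset.mem_Icc]
      omega
  · rw [if_neg h]
    apply Finset.sum_eq_zero
    intro s hs
    rw [Finset.mem_Icc] at hs
    rw [if_neg, mul_zero]
    intro hc
    have hc0 := DFunLike.congr_fun hc 0
    have hc1 := DFunLike.congr_fun hc 1
    simp [Finsupp.single_apply] at hc0 hc1
    omega

lemma pascal_cast (a b : ℕ) :
    ((Nat.choose (a + 1 + (b + 1)) (a + 1) : ZMod 2)) =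
      (Nat.choose (a + 1 - 1 + (b + 1)) (a + 1 - 1) : ZMod 2) +
      (Nat.choose (a + 1 + (b + 1) - 1) (a + 1) : ZMod 2) := by
  have h4 : a + 1 + (b + 1) = (a + (b + 1)) + 1 := by ring
  have h5 : a + 1 + (b + 1) - 1 = a + (b + 1) := by omega
  have h6 : a + 1 - 1 + (b + 1) = a + (b + 1) := by omega
  rw [h5, h6, h4, Nat.choose_succ_succ]
  push_cast
  ring

lemma gGen_rec (r : ℕ) :
    gGen (r + 3) = X 0 * gGen (r + 1) + X 1 * gGen r := by
  apply MvPolynomial.ext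
  intro d
  rw [coeff_add, coeff_X_mul', coeff_X_mul', coeff_gGen]
  have e00 : ((d - Finsupp.single (0 : Fin 2) 1 : Fin 2 →₀ ℕ)) 0 = d 0 - 1 := by
    rw [Finsupp.tsub_apply]; simp [Finsupp.single_apply]
  have e01 : ((d - Finsupp.single (0 : Fin 2) 1 : Fin 2 →₀ ℕ)) 1 = d 1 := by
    rw [Finsupp.tsub_apply]; simp [Finsupp.single_apply]
  have e10 : ((d - Finsupp.single (1 : Fin 2) 1 : Fin 2 →₀ ℕ)) 0 = d 0 := by
    rw [Finsupp.tsub_apply]; simp [Finsupp.single_apply]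
  have e11 : ((d - Finsupp.single (1 : Fin 2) 1 : Fin 2 →₀ ℕ)) 1 = d 1 - 1 := by
    rw [Finsupp.tsub_apply]; simp [Finsupp.single_apply]
  rw [coeff_gGen, coeff_gGen, e00, e01, e10, e11]
  simp only [Finsupp.mem_support_iff, ne_eq]
  by_cases hA : 2 * d 0 + 3 * d 1 = r + 3
  · rw [if_pos hA]
    by_cases h0 : d 0 = 0
    · have h1 : ¬ d 1 = 0 := by omega
      rw [if_neg (by simpa using h0), if_pos h1,
        if_pos (show 2 * d 0 + 3 * (d 1 - 1) = r by omega), h0, zero_add]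
      have hb : ∃ b, d 1 = b + 1 := ⟨d 1 - 1, by omega⟩
      obtain ⟨b, hb⟩ := hb
      rw [hb]
      simp
    · by_cases h1 : d 1 = 0
      · rw [if_pos (show ¬ d 0 = 0 from h0),
          if_pos (show 2 * (d 0 - 1) + 3 * d 1 = r + 1 by omega),
          if_neg (not_not_intro h1), h1]
        simp [Nat.choose_self]
      · rw [if_pos (show ¬ d 0 = 0 from h0),
          if_pos (show 2 * (d 0 - 1) + 3 * d 1 = r + 1 by omega),
          if_pos (show ¬ d 1 = 0 from h1),
          if_pos (show 2 * d 0 + 3 * (d 1 - 1) = r by omega)]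
        obtain ⟨a, ha⟩ : ∃ a, d 0 = a + 1 := ⟨d 0 - 1, by omega⟩
        obtain ⟨b, hb⟩ : ∃ b, d 1 = b + 1 := ⟨d 1 - 1, by omega⟩
        rw [ha, hb]
        rw [pascal_cast]
        have hb1 : a + 1 + (b + 1) - 1 = a + 1 + (b + 1 - 1) := by omega
        rw [hb1]
  · rw [if_neg hA]
    have t1 : (if ¬ d 0 = 0 then
        (if 2 * (d 0 - 1) + 3 * d 1 = r + 1 then
          (Nat.choose (d 0 - 1 + d 1) (d 0 - 1) : ZMod 2) else 0) else 0) = 0 := by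
      by_cases h0 : d 0 = 0
      · rw [if_neg (not_not_intro h0)]
      · rw [if_pos h0, if_neg (show ¬ (2 * (d 0 - 1) + 3 * d 1 = r + 1) by omega)]
    have t2 : (if ¬ d 1 = 0 then
        (if 2 * d 0 + 3 * (d 1 - 1) = r then
          (Nat.choose (d 0 + (d 1 - 1)) (d 0) : ZMod 2) else 0) else 0) = 0 := by
      by_cases h0 : d 1 = 0
      · rw [if_neg (not_not_intro h0)]
      · rw [if_pos h0, if_neg (show ¬ (2 * d 0 + 3 * (d 1 - 1) = r) by omega)]
    rw [t1, t2, add_zero]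

lemma gGen_zero : gGen 0 = 1 := by
  apply MvPolynomial.ext
  intro d
  rw [coeff_gGen]
  by_cases h : d = 0
  · subst h
    simp
  · have h01 : ¬ (d 0 = 0 ∧ d 1 = 0) := by
      intro ⟨a, b⟩; exact h (fin2_ext a b)
    rw [if_neg (by omega), coeff_one, if_neg (by exact fun hc => h hc.symm)]

lemma gGen_one : gGen 1 = 0 := by
  apply MvPolynomial.ext
  intro d
  rw [coeff_gGen, coeff_zero]
  by_cases h : 2 * d 0 + 3 * d 1 = 1
  · omega
  · rw [if_neg h]

lemma X_pow_coeff (i : Fin 2) (t : ℕ) (d : Fin 2 →₀ ℕ) :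
    coeff d (X i ^ t : A) = if Finsupp.single i t = d then 1 else 0 := by
  rw [X_pow_eq_monomial, coeff_monomial]

lemma gGen_two : gGen 2 = X 0 := by
  apply MvPolynomial.ext
  intro d
  rw [coeff_gGen]
  have : (X (0 : Fin 2) : A) = X 0 ^ 1 := by ring
  rw [this, X_pow_coeff]
  by_cases h : 2 * d 0 + 3 * d 1 = 2
  · have h0 : d 0 = 1 := by omega
    have h1 : d 1 = 0 := by omega
    rw [if_pos h, if_pos (fin2_ext (by simp [h0]) (by simp [h1]))]
    simp [h0, h1]
  · rw [if_neg h, if_neg]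
    intro hc
    have hc0 := DFunLike.congr_fun hc 0
    have hc1 := DFunLike.congr_fun hc 1
    simp [Finsupp.single_apply] at hc0 hc1
    omega

lemma gGen_three : gGen 3 = X 1 := by
  apply MvPolynomial.ext
  intro d
  rw [coeff_gGen]
  have : (X (1 : Fin 2) : A) = X 1 ^ 1 := by ring
  rw [this, X_pow_coeff]
  by_cases h : 2 * d 0 + 3 * d 1 = 3
  · have h0 : d 0 = 0 := by omega
    have h1 : d 1 = 1 := by omega
    rw [if_pos h, if_pos (fin2_ext (by simp [h0]) (by simp [h1]))]
    simp [h0, h1]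
  · rw [if_neg h, if_neg]
    intro hc
    have hc0 := DFunLike.congr_fun hc 0
    have hc1 := DFunLike.congr_fun hc 1
    simp [Finsupp.single_apply] at hc0 hc1
    omega

lemma char2 : ∀ x : A, x + x = 0 := CharTwo.add_self_eq_zero

lemma add_sq' (x y : A) : (x + y) ^ 2 = x ^ 2 + y ^ 2 := CharTwo.add_sq x y

/-- doubling identities -/
lemma gGen_doubling : ∀ r : ℕ,
    (gGen (2 * r + 2) = gGen (r + 1) ^ 2 + X 0 * gGen r ^ 2) ∧
    (gGen (2 * r + 3) = X 1 * gGen r ^ 2) := by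
  intro r
  induction r using Nat.strong_induction_on with
  | _ r ih =>
    match r with
    | 0 =>
      constructor
      · rw [gGen_one, gGen_zero, gGen_two]
        ring
      · rw [gGen_zero, gGen_three]
        ring
    | 1 =>
      constructor
      · show gGen (1 + 3) = _
        rw [gGen_rec, gGen_two, gGen_one]
        ring
      · show gGen (2 + 3) = _
        rw [gGen_rec, gGen_three, gGen_two, gGen_one]
        rw [mul_comm (X 0) (X 1)]
        rw [show (X 1 * X 0 + X 1 * X 0 : A) = 0 from char2 _]
        ring
    | (t + 2) =>
      obtain ⟨e1, o1⟩ := ih (t + 1) (by omega)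
      obtain ⟨_, o0⟩ := ih t (by omega)
      constructor
      · show gGen ((2 * t + 3) + 3) = _
        rw [gGen_rec, show 2 * t + 3 + 1 = 2 * (t + 1) + 2 from by ring, e1,
          show (2 * t + 3 : ℕ) = 2 * t + 3 from rfl, o0]
        have hrec : gGen (t + 3) = X 0 * gGen (t + 1) + X 1 * gGen t := gGen_rec t
        rw [show t + 2 + 1 = t + 3 from rfl, hrec, add_sq']
        ring
      · show gGen ((2 * t + 4) + 3) = _
        rw [gGen_rec, show 2 * t + 4 + 1 = 2 * (t + 1) + 3 from by ring, o1,
          show (2 * t + 4 : ℕ) = 2 * (t + 1) + 2 from by ring, e1]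
        calc X 0 * (X 1 * gGen (t + 1) ^ 2) + X 1 * (gGen (t + 1 + 1) ^ 2 + X 0 * gGen (t + 1) ^ 2)
            = X 1 * gGen (t + 1 + 1) ^ 2 +
              (X 0 * (X 1 * gGen (t + 1) ^ 2) + X 0 * (X 1 * gGen (t + 1) ^ 2)) := by ring
          _ = X 1 * gGen (t + 1 + 1) ^ 2 := by rw [char2, add_zero]

/-- the recursively defined generators: `Aa k = g_{2^(k+2)-2}`, `Bb k = g_{2^(k+2)-1}` -/
noncomputable def AB : ℕ → A × A
  | 0 => ((X 0 : A), (X 1 : A))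
  | (k+1) => ((AB k).2 ^ 2 + X 0 * (AB k).1 ^ 2, X 1 * (AB k).1 ^ 2)

noncomputable def Aa (k : ℕ) : A := (AB k).1
noncomputable def Bb (k : ℕ) : A := (AB k).2

lemma Aa_zero : Aa 0 = X 0 := rfl
lemma Bb_zero : Bb 0 = X 1 := rfl
lemma Aa_succ (k : ℕ) : Aa (k + 1) = Bb k ^ 2 + X 0 * Aa k ^ 2 := rfl
lemma Bb_succ (k : ℕ) : Bb (k + 1) = X 1 * Aa k ^ 2 := rfl

lemma two_pow_ge (k : ℕ) : 4 ≤ 2 ^ (k + 2) := by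
  calc (4 : ℕ) = 2 ^ 2 := rfl
    _ ≤ 2 ^ (k + 2) := Nat.pow_le_pow_right (by norm_num) (by omega)

lemma two_pow_succ (k : ℕ) : 2 ^ (k + 1) = 2 * 2 ^ k := by
  rw [pow_succ, mul_comm]

lemma gGen_pow2 : ∀ k : ℕ,
    gGen (2 ^ (k + 2) - 2) = Aa k ∧ gGen (2 ^ (k + 2) - 1) = Bb k ∧
      gGen (2 ^ (k + 2) - 3) = 0 := by
  intro k
  induction k with
  | zero =>
    refine ⟨gGen_two, gGen_three, gGen_one⟩
  | succ k ih =>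
    obtain ⟨ha, hb, hc⟩ := ih
    have h4 := two_pow_ge k
    have hs : (2 : ℕ) ^ (k + 1 + 2) = 2 * 2 ^ (k + 2) := two_pow_succ (k + 2)
    refine ⟨?_, ?_, ?_⟩
    · have e1 : 2 ^ (k + 1 + 2) - 2 = 2 * (2 ^ (k + 2) - 2) + 2 := by omega
      rw [e1, (gGen_doubling _).1, show 2 ^ (k + 2) - 2 + 1 = 2 ^ (k + 2) - 1 from by omega,
        ha, hb, Aa_succ]
    · have e1 : 2 ^ (k + 1 + 2) - 1 = 2 * (2 ^ (k + 2) - 2) + 3 := by omega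
      rw [e1, (gGen_doubling _).2, ha, Bb_succ]
    · have e1 : 2 ^ (k + 1 + 2) - 3 = 2 * (2 ^ (k + 2) - 3) + 3 := by omega
      rw [e1, (gGen_doubling _).2, hc]
      ring

/-- all `gGen r` for `r ≥ 2^(k+2) - 3` lie in the span -/
lemma gGen_mem (k : ℕ) : ∀ r : ℕ, 2 ^ (k + 2) - 3 ≤ r →
    gGen r ∈ Ideal.span ({Aa k, Bb k} : Set A) := by
  intro r
  induction r using Nat.strong_induction_on with
  | _ r ih =>
    intro hr
    have h4 := two_pow_ge k
    obtain ⟨ha, hb, hc⟩ := gGen_pow2 k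
    by_cases h1 : r = 2 ^ (k + 2) - 3
    · rw [h1, hc]; exact Ideal.zero_mem _
    · by_cases h2 : r = 2 ^ (k + 2) - 2
      · rw [h2, ha]
        exact Ideal.subset_span (by simp)
      · by_cases h3 : r = 2 ^ (k + 2) - 1
        · rw [h3, hb]
          exact Ideal.subset_span (by simp)
        · have hr4 : 2 ^ (k + 2) ≤ r := by omega
          obtain ⟨t, ht⟩ : ∃ t, r = t + 3 := ⟨r - 3, by omega⟩
          subst ht
          rw [gGen_rec]
          exact Ideal.add_mem _
            (Ideal.mul_mem_left _ _ (ih (t + 1) (by omega) (by omega)))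
            (Ideal.mul_mem_left _ _ (ih t (by omega) (by omega)))

lemma monomial_eq_prod (d : Fin 2 →₀ ℕ) (c : ZMod 2) :
    (monomial d c : A) = C c * (X 0 ^ d 0 * X 1 ^ d 1) := by
  rw [monomial_eq]
  congr 1
  rw [Finsupp.prod_pow, Fin.prod_univ_two]

lemma mem_span_mono : ∀ k : ℕ, ∀ i j : ℕ, 2 ^ (k + 3) - 7 ≤ 2 * i + 3 * j →
    (X 0 ^ i * X 1 ^ j : A) ∈ Ideal.span ({Aa k, Bb k} : Set A) := by
  intro k
  induction k with
  | zero =>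
    intro i j h
    rw [show ({Aa 0, Bb 0} : Set A) = {X 0, X 1} from by rw [Aa_zero, Bb_zero]]
    by_cases hi : i = 0
    · obtain ⟨j', hj'⟩ : ∃ j', j = j' + 1 := ⟨j - 1, by omega⟩
      subst hj'
      exact Ideal.mem_span_pair.mpr ⟨0, X 0 ^ i * X 1 ^ j', by ring⟩
    · obtain ⟨i', hi'⟩ : ∃ i', i = i' + 1 := ⟨i - 1, by omega⟩
      subst hi'
      exact Ideal.mem_span_pair.mpr ⟨X 0 ^ i' * X 1 ^ j, 0, by ring⟩
  | succ k ih =>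
    have h8 : 8 ≤ 2 ^ (k + 3) :=
      calc (8 : ℕ) = 2 ^ 3 := rfl
        _ ≤ 2 ^ (k + 3) := Nat.pow_le_pow_right (by norm_num) (by omega)
    have hpow : (2 : ℕ) ^ (k + 4) = 2 * 2 ^ (k + 3) := two_pow_succ (k + 3)
    have hB : ∀ i j : ℕ, 1 ≤ j → 2 ^ (k + 4) - 7 ≤ 2 * i + 3 * j →
        (X 0 ^ i * X 1 ^ j : A) ∈ Ideal.span ({Aa (k+1), Bb (k+1)} : Set A) := by
      intro i j hj hij
      have hi2 : i = 2 * (i / 2) + i % 2 := by omega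
      have hj2 : j = 2 * ((j - 1) / 2) + 1 + (j - 1) % 2 := by omega
      have hpq : 2 ^ (k + 3) - 7 ≤ 2 * (i / 2) + 3 * ((j - 1) / 2) := by omega
      obtain ⟨α, β, hαβ⟩ := Ideal.mem_span_pair.mp (ih (i / 2) ((j - 1) / 2) hpq)
      have hsq : (X 0 ^ (i / 2) * X 1 ^ ((j - 1) / 2) : A) ^ 2
          = α ^ 2 * Aa k ^ 2 + β ^ 2 * Bb k ^ 2 := by
        rw [← hαβ, CharTwo.add_sq, mul_pow, mul_pow]
      apply Ideal.mem_span_pair.mpr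
      refine ⟨X 0 ^ (i % 2) * X 1 ^ ((j - 1) % 2 + 1) * β ^ 2,
        X 0 ^ (i % 2) * X 1 ^ ((j - 1) % 2) * (α ^ 2 - β ^ 2 * X 0), ?_⟩
      rw [Aa_succ, Bb_succ]
      have hi' : (X 0 ^ i : A) = (X 0 ^ (i / 2)) ^ 2 * X 0 ^ (i % 2) := by
        nth_rewrite 1 [hi2]
        rw [pow_add, show 2 * (i / 2) = (i / 2) * 2 from by ring, pow_mul]
      have hj' : (X 1 ^ j : A) = (X 1 ^ ((j - 1) / 2)) ^ 2 * X 1 ^ ((j - 1) % 2 + 1) := by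
        nth_rewrite 1 [hj2]
        rw [show 2 * ((j-1)/2) + 1 + (j-1) % 2 = 2 * ((j-1)/2) + ((j-1) % 2 + 1) from by ring,
          pow_add, show 2 * ((j-1)/2) = ((j-1)/2) * 2 from by ring, pow_mul]
      rw [hi', hj']
      linear_combination -(X 0 ^ (i % 2) * X 1 ^ ((j - 1) % 2 + 1) : A) * hsq
    intro i j hij
    have e34 : (2:ℕ) ^ (k + 1 + 3) = 2 ^ (k + 4) := rfl
    have e23 : (2:ℕ) ^ (k + 1 + 2) = 2 ^ (k + 3) := rfl
    by_cases hj : 1 ≤ j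
    · exact hB i j hj (by omega)
    · have hj0 : j = 0 := by omega
      subst hj0
      have hi : 2 ^ (k + 3) - 3 ≤ i := by omega
      have hU : (X 0 ^ (2 ^ (k + 3) - 3) : A) ∈
          Ideal.span ({Aa (k+1), Bb (k+1)} : Set A) := by
        have hg : gGen (2 ^ (k + 4) - 6) ∈ Ideal.span ({Aa (k+1), Bb (k+1)} : Set A) :=
          gGen_mem (k+1) _ (by omega)
        have hh : (X 0 ^ (2 ^ (k + 3) - 3) - gGen (2 ^ (k + 4) - 6) : A) ∈
            Ideal.span ({Aa (k+1), Bb (k+1)} : Set A) := by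
          rw [MvPolynomial.as_sum (X 0 ^ (2 ^ (k + 3) - 3) - gGen (2 ^ (k + 4) - 6) : A)]
          apply Ideal.sum_mem
          intro d hd
          rw [MvPolynomial.mem_support_iff] at hd
          have hco : coeff d (X 0 ^ (2 ^ (k + 3) - 3) - gGen (2 ^ (k + 4) - 6) : A)
              = (if Finsupp.single 0 (2 ^ (k + 3) - 3) = d then 1 else 0)
                - (if 2 * d 0 + 3 * d 1 = 2 ^ (k + 4) - 6 then
                    (Nat.choose (d 0 + d 1) (d 0) : ZMod 2) else 0) := by
            rw [coeff_sub, X_pow_coeff, coeff_gGen]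
          by_cases hd1 : d 1 = 0
          · exfalso
            apply hd
            rw [hco]
            by_cases hd0 : d 0 = 2 ^ (k + 3) - 3
            · rw [if_pos (fin2_ext (by simp [hd0]) (by simp [hd1])), if_pos (by omega)]
              simp [hd0, hd1, Nat.choose_self]
            · rw [if_neg, if_neg (by omega), sub_zero]
              intro hc
              exact hd0 (by simpa [Finsupp.single_apply] using (DFunLike.congr_fun hc 0).symm)
          · have hdeg : 2 * d 0 + 3 * d 1 = 2 ^ (k + 4) - 6 := by
              by_contra hne
              apply hd
              rw [hco, if_neg, if_neg hne, sub_zero]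
              intro hc
              exact hd1 (by simpa [Finsupp.single_apply] using (DFunLike.congr_fun hc 1).symm)
            rw [monomial_eq_prod]
            exact Ideal.mul_mem_left _ _ (hB (d 0) (d 1) (by omega) (by omega))
        have hsplit : (X 0 ^ (2 ^ (k + 3) - 3) : A)
            = (X 0 ^ (2 ^ (k + 3) - 3) - gGen (2 ^ (k + 4) - 6)) + gGen (2 ^ (k + 4) - 6) := by
          ring
        rw [hsplit]
        exact Ideal.add_mem _ hh hg
      have hfin : (X 0 ^ i * X 1 ^ 0 : A)
          = X 0 ^ (i - (2 ^ (k + 3) - 3)) * X 0 ^ (2 ^ (k + 3) - 3) := by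
        rw [pow_zero, mul_one, ← pow_add]
        congr 1
        omega
      rw [hfin]
      exact Ideal.mul_mem_left _ _ hU

/-- evaluation `w2 ↦ X`, `w3 ↦ 0` into `ℤ/2[X]` -/
noncomputable def psi : A →ₐ[ZMod 2] Polynomial (ZMod 2) :=
  aeval ![Polynomial.X, 0]

lemma psi_X0 : psi (X 0) = Polynomial.X := by
  rw [psi, aeval_X]
  rfl

lemma psi_X1 : psi (X 1) = 0 := by
  rw [psi, aeval_X]
  rfl

lemma psi_Bb (k : ℕ) : psi (Bb k) = 0 := by
  cases k with
  | zero => exact psi_X1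
  | succ k => rw [Bb_succ, map_mul, psi_X1, zero_mul]

lemma psi_Aa : ∀ k : ℕ, psi (Aa k) = Polynomial.X ^ (2 ^ (k + 1) - 1) := by
  intro k
  induction k with
  | zero => rw [Aa_zero, psi_X0]; norm_num
  | succ k ih =>
    have h2 : (1:ℕ) ≤ 2 ^ (k + 1) := Nat.one_le_two_pow
    rw [Aa_succ, map_add, map_mul, map_pow, map_pow, psi_Bb, psi_X0, ih, ← pow_mul]
    rw [show (0:Polynomial (ZMod 2)) ^ 2 = 0 from by ring, zero_add, ← pow_succ']
    congr 1
    rw [two_pow_succ (k+1)]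
    omega

lemma Aa_ne_zero (k : ℕ) : Aa k ≠ 0 := by
  intro h
  have := psi_Aa k
  rw [h, map_zero] at this
  exact (pow_ne_zero _ Polynomial.X_ne_zero) this.symm

lemma Bb_ne_zero (k : ℕ) : Bb k ≠ 0 := by
  cases k with
  | zero =>
    rw [Bb_zero]
    exact X_ne_zero _
  | succ k =>
    rw [Bb_succ]
    exact mul_ne_zero (X_ne_zero _) (pow_ne_zero _ (Aa_ne_zero k))

/-- `X i` divides iff all coefficients with `d i = 0` vanish -/
lemma Xdvd_iff (i : Fin 2) (p : A) :
    X i ∣ p ↔ ∀ d : Fin 2 →₀ ℕ, d i = 0 → coeff d p = 0 := by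
  rw [X_dvd_iff_modMonomial_eq_zero]
  constructor
  · intro h d hd
    have hc := congrArg (coeff d) h
    rw [coeff_zero] at hc
    rw [← hc, MvPolynomial.coeff_modMonomial_of_not_le]
    intro hle
    have := hle i
    simp [hd] at this
  · intro h
    apply MvPolynomial.ext
    intro d
    rw [coeff_zero]
    by_cases hle : Finsupp.single i 1 ≤ d
    · rw [MvPolynomial.coeff_modMonomial_of_le _ hle]
    · rw [MvPolynomial.coeff_modMonomial_of_not_le _ hle]
      apply h
      by_contra hd
      apply hle
      intro j
      rcases eq_or_ne j i with rfl | hj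
      · simp; omega
      · simp [Finsupp.single_apply, Ne.symm hj]

lemma psi_coeff_vfree (r : A) (hv : ∀ d : Fin 2 →₀ ℕ, d 1 ≠ 0 → coeff d r = 0)
    (t : ℕ) : (psi r).coeff t = coeff (Finsupp.single 0 t) r := by
  conv_lhs => rw [MvPolynomial.as_sum r]
  rw [map_sum, Polynomial.finset_sum_coeff]
  have hterm : ∀ d ∈ r.support,
      (psi (monomial d (coeff d r))).coeff t
        = if Finsupp.single (0 : Fin 2) t = d then coeff d r else 0 := by
    intro d hd
    rw [monomial_eq_prod, map_mul, map_mul, map_pow, map_pow, psi_X0, psi_X1]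
    by_cases hd1 : d 1 = 0
    · rw [hd1, pow_zero, mul_one]
      have : psi (C (coeff d r)) = Polynomial.C (coeff d r) := by
        rw [psi, aeval_C]
        rfl
      rw [this, Polynomial.coeff_C_mul, Polynomial.coeff_X_pow]
      by_cases hd0 : d 0 = t
      · rw [if_pos (by omega), if_pos (fin2_ext (by simp [hd0]) (by simp [hd1]))]
        rw [mul_one]
      · rw [if_neg (by omega), if_neg, mul_zero]
        intro hc
        exact hd0 (by simpa [Finsupp.single_apply] using (DFunLike.congr_fun hc 0).symm)
    · exfalso
      exact (MvPolynomial.mem_support_iff.mp hd) (hv d hd1)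
  rw [Finset.sum_congr rfl hterm, Finset.sum_ite_eq]
  by_cases hmem : Finsupp.single (0:Fin 2) t ∈ r.support
  · rw [if_pos hmem]
  · rw [if_neg hmem]
    exact (MvPolynomial.notMem_support_iff.mp hmem).symm

lemma X1_dvd_of_psi (q : A) (h : psi q = 0) : X 1 ∣ q := by
  have hq := MvPolynomial.divMonomial_add_modMonomial_single q (1 : Fin 2)
  set Q := q.divMonomial (Finsupp.single 1 1) with hQ
  set r := q.modMonomial (Finsupp.single 1 1) with hr
  have hvfree : ∀ d : Fin 2 →₀ ℕ, d 1 ≠ 0 → coeff d r = 0 := by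
    intro d hd
    apply MvPolynomial.coeff_modMonomial_of_le
    rw [Finsupp.single_le_iff]
    omega
  have hpsir : psi r = 0 := by
    have h2 : psi q = psi (X 1 * Q) + psi r := by rw [← map_add, hq]
    rw [map_mul, psi_X1, zero_mul, zero_add] at h2
    rw [← h2, h]
  have hr0 : r = 0 := by
    apply MvPolynomial.ext
    intro d
    rw [coeff_zero]
    by_cases hd1 : d 1 = 0
    · have hd : d = Finsupp.single 0 (d 0) := fin2_ext (by simp) (by simp [hd1])
      rw [hd, ← psi_coeff_vfree r hvfree (d 0), hpsir, Polynomial.coeff_zero]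
    · exact hvfree d hd1
  exact ⟨Q, by rw [← hq, hr0, add_zero]⟩

lemma two_eq_zero' : (2 : A) = 0 := by
  have := CharTwo.add_self_eq_zero (1 : A)
  rw [show (2 : A) = 1 + 1 from by ring, this]

lemma pderiv_sq (i : Fin 2) (p : A) : pderiv i (p ^ 2) = 0 := by
  rw [pderiv_pow]
  have h2 : ((2 : ℕ) : A) = 0 := by
    rw [show ((2:ℕ):A) = (2 : A) from by push_cast; ring, two_eq_zero']
  rw [h2, zero_mul, zero_mul]

/-- Frobenius decomposition: existence -/
lemma exists_decomp (p : A) : ∃ s₀ s₁ s₂ s₃ : A,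
    p = s₀ ^ 2 + X 0 * s₁ ^ 2 + X 1 * s₂ ^ 2 + X 0 * X 1 * s₃ ^ 2 := by
  induction p using MvPolynomial.induction_on with
  | C c =>
    refine ⟨C c, 0, 0, 0, ?_⟩
    rw [← map_pow, ZMod.pow_card]
    ring
  | add p q hp hq =>
    obtain ⟨a0, a1, a2, a3, ha⟩ := hp
    obtain ⟨b0, b1, b2, b3, hb⟩ := hq
    refine ⟨a0 + b0, a1 + b1, a2 + b2, a3 + b3, ?_⟩
    rw [ha, hb, CharTwo.add_sq a0 b0, CharTwo.add_sq a1 b1, CharTwo.add_sq a2 b2,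
      CharTwo.add_sq a3 b3]
    ring
  | mul_X p i hp =>
    obtain ⟨a0, a1, a2, a3, ha⟩ := hp
    have hi : i = 0 ∨ i = 1 := by
      fin_cases i
      · exact Or.inl rfl
      · exact Or.inr rfl
    rcases hi with rfl | rfl
    · exact ⟨X 0 * a1, a0, X 0 * a3, a2, by rw [ha]; ring⟩
    · exact ⟨X 1 * a2, X 1 * a3, a0, a1, by rw [ha]; ring⟩

/-- Frobenius decomposition: uniqueness (zero form) -/
lemma decomp_zero {s₀ s₁ s₂ s₃ : A}
    (h : s₀ ^ 2 + X 0 * s₁ ^ 2 + X 1 * s₂ ^ 2 + X 0 * X 1 * s₃ ^ 2 = 0) :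
    s₀ = 0 ∧ s₁ = 0 ∧ s₂ = 0 ∧ s₃ = 0 := by
  have d0 := congrArg (pderiv (0 : Fin 2)) h
  rw [map_add, map_add, map_add, pderiv_sq, pderiv_mul, pderiv_sq, pderiv_mul, pderiv_sq,
    pderiv_mul, pderiv_sq, pderiv_X_self, pderiv_mul, pderiv_X_self,
    pderiv_X_of_ne (show (1:Fin 2) ≠ 0 from by decide), map_zero] at d0
  -- d0 : 0 + (X 0 * 0 + 1 * s₁^2) + (X 1 * 0 + 0 * s₂^2) + (X 0 * X 1 * 0 + (X 0 * 0 + 1 * X 1) * s₃^2) = 0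
  have h1 : s₁ ^ 2 + X 1 * s₃ ^ 2 = 0 := by linear_combination d0
  have d1 := congrArg (pderiv (1 : Fin 2)) h1
  rw [map_add, pderiv_sq, pderiv_mul, pderiv_sq, pderiv_X_self, map_zero] at d1
  have hs3 : s₃ = 0 := by
    have : s₃ ^ 2 = 0 := by linear_combination d1
    exact pow_eq_zero_iff (by norm_num) |>.mp this
  have hs1 : s₁ = 0 := by
    have : s₁ ^ 2 = 0 := by rw [hs3] at h1; linear_combination h1
    exact pow_eq_zero_iff (by norm_num) |>.mp this
  have e1 := congrArg (pderiv (1 : Fin 2)) h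
  rw [map_add, map_add, map_add, pderiv_sq, pderiv_mul, pderiv_sq, pderiv_mul, pderiv_sq,
    pderiv_mul, pderiv_sq, pderiv_X_self, pderiv_mul,
    pderiv_X_of_ne (show (0:Fin 2) ≠ 1 from by decide), pderiv_X_self, map_zero] at e1
  have hs2 : s₂ = 0 := by
    have h2 : s₂ ^ 2 + X 0 * s₃ ^ 2 = 0 := by linear_combination e1
    rw [hs3] at h2
    have : s₂ ^ 2 = 0 := by linear_combination h2
    exact pow_eq_zero_iff (by norm_num) |>.mp this
  have hs0 : s₀ = 0 := by
    rw [hs1, hs2, hs3] at h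
    have : s₀ ^ 2 = 0 := by linear_combination h
    exact pow_eq_zero_iff (by norm_num) |>.mp this
  exact ⟨hs0, hs1, hs2, hs3⟩

lemma eq_of_add_eq_zero {x y : A} (h : x + y = 0) : x = y := by
  have := CharTwo.neg_eq y
  rw [← this]
  exact eq_neg_of_add_eq_zero_left h

/-- squared divisibility transfer -/
lemma DivSq (l : ℕ) (ih : ∀ p q : A, p * Bb l = q * Aa l → Aa l ∣ p) :
    ∀ s t : A, s * Bb l ^ 2 = t * Aa l ^ 2 → Aa l ^ 2 ∣ s := by
  intro s t hst
  obtain ⟨s0, s1, s2, s3, hs⟩ := exists_decomp s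
  obtain ⟨t0, t1, t2, t3, ht⟩ := exists_decomp t
  have key : (s0 * Bb l + t0 * Aa l) ^ 2
      + X 0 * (s1 * Bb l + t1 * Aa l) ^ 2
      + X 1 * (s2 * Bb l + t2 * Aa l) ^ 2
      + X 0 * X 1 * (s3 * Bb l + t3 * Aa l) ^ 2 = 0 := by
    rw [CharTwo.add_sq, CharTwo.add_sq, CharTwo.add_sq, CharTwo.add_sq]
    have expand : s * Bb l ^ 2 - t * Aa l ^ 2 = 0 := by rw [hst]; ring
    rw [hs, ht] at expand
    linear_combination expand + (t0 ^ 2 * Aa l ^ 2 + Aa l ^ 2 * X 0 * t1 ^ 2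
      + Aa l ^ 2 * X 0 * X 1 * t3 ^ 2 + Aa l ^ 2 * X 1 * t2 ^ 2) * two_eq_zero'
  obtain ⟨h0, h1, h2, h3⟩ := decomp_zero key
  obtain ⟨c0, hc0⟩ := ih s0 t0 (eq_of_add_eq_zero h0)
  obtain ⟨c1, hc1⟩ := ih s1 t1 (eq_of_add_eq_zero h1)
  obtain ⟨c2, hc2⟩ := ih s2 t2 (eq_of_add_eq_zero h2)
  obtain ⟨c3, hc3⟩ := ih s3 t3 (eq_of_add_eq_zero h3)
  refine ⟨c0 ^ 2 + X 0 * c1 ^ 2 + X 1 * c2 ^ 2 + X 0 * X 1 * c3 ^ 2, ?_⟩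
  rw [hs, hc0, hc1, hc2, hc3]
  ring

lemma Div : ∀ l : ℕ, ∀ p q : A, p * Bb l = q * Aa l → Aa l ∣ p := by
  intro l
  induction l with
  | zero =>
    intro p q h
    rw [Aa_zero]
    rw [Aa_zero, Bb_zero] at h
    rw [Xdvd_iff]
    intro d hd
    have h1 : coeff (d + Finsupp.single 1 1) (p * X 1) = coeff d p :=
      MvPolynomial.coeff_mul_X d 1 p
    rw [h] at h1
    rw [← h1, MvPolynomial.coeff_mul_X']
    rw [if_neg]
    simp only [Finsupp.mem_support_iff, ne_eq, not_not]
    simp [hd]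
  | succ l ih =>
    intro p q h
    rw [Bb_succ, Aa_succ] at h
    -- show X 1 ∣ q
    have hpsiq : psi q = 0 := by
      have h2 := congrArg psi h
      rw [map_mul, map_mul, map_mul, psi_X1, map_pow, map_add, map_pow, map_mul, map_pow,
        psi_Bb, psi_Aa, psi_X0] at h2
      have h3 : psi q * (Polynomial.X * (Polynomial.X ^ (2 ^ (l + 1) - 1)) ^ 2) = 0 := by
        linear_combination -h2
      rcases mul_eq_zero.mp h3 with hq | hx
      · exact hq
      · exfalso
        exact (mul_ne_zero Polynomial.X_ne_zero
          (pow_ne_zero _ (pow_ne_zero _ Polynomial.X_ne_zero))) hx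
    obtain ⟨q1, hq1⟩ := X1_dvd_of_psi q hpsiq
    rw [hq1] at h
    -- cancel X 1
    have hc : p * Aa l ^ 2 = q1 * (Bb l ^ 2 + X 0 * Aa l ^ 2) := by
      have hX1 : (X 1 : A) ≠ 0 := X_ne_zero _
      apply mul_left_cancel₀ hX1
      linear_combination h
    -- rearrange: q1 * Bb l ^ 2 = (p + q1 * X 0) * Aa l ^ 2... over char 2
    have hc2 : q1 * Bb l ^ 2 + (p + q1 * X 0) * Aa l ^ 2 = 0 + 0 := by
      rw [add_zero]
      have hpp : p * Aa l ^ 2 + p * Aa l ^ 2 = 0 := CharTwo.add_self_eq_zero _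
      linear_combination (-1 : A) * hc + hpp
    rw [add_zero] at hc2
    have hc3 : q1 * Bb l ^ 2 = (p + q1 * X 0) * Aa l ^ 2 := eq_of_add_eq_zero hc2
    obtain ⟨c, hcq⟩ := DivSq l ih q1 (p + q1 * X 0) hc3
    -- now p * Aa l ^ 2 = Aa l ^ 2 * c * Aa (l+1)
    have hfin : p * Aa l ^ 2 = (Aa (l + 1) * c) * Aa l ^ 2 := by
      rw [Aa_succ]
      rw [hcq] at hc
      linear_combination hc
    exact ⟨c, mul_right_cancel₀ (pow_ne_zero 2 (Aa_ne_zero l)) hfin⟩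

lemma not_mem_span_pow (k : ℕ) :
    (X 0 ^ (2 ^ (k + 3) - 4) : A) ∉ Ideal.span ({Aa (k + 1), Bb (k + 1)} : Set A) := by
  intro hmem
  obtain ⟨f, g, hfg⟩ := Ideal.mem_span_pair.mp hmem
  have hk1 : (1:ℕ) ≤ 2 ^ k := Nat.one_le_two_pow
  have e1 : (2:ℕ) ^ (k + 1) = 2 * 2 ^ k := two_pow_succ k
  have e2 : (2:ℕ) ^ (k + 2) = 2 * 2 ^ (k + 1) := two_pow_succ (k + 1)
  have e3 : (2:ℕ) ^ (k + 3) = 2 * 2 ^ (k + 2) := two_pow_succ (k + 2)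
  have DA : pderiv (0 : Fin 2) (Aa (k + 1)) = Aa k ^ 2 := by
    rw [Aa_succ, map_add, pderiv_sq, pderiv_mul, pderiv_sq, pderiv_X_self]
    ring
  have DB : pderiv (0 : Fin 2) (Bb (k + 1)) = 0 := by
    rw [Bb_succ, pderiv_mul, pderiv_sq, pderiv_X_of_ne (by decide : (1 : Fin 2) ≠ 0)]
    ring
  have Dn : pderiv (0 : Fin 2) (X 0 ^ (2 ^ (k + 3) - 4) : A) = 0 := by
    rw [show (X 0 ^ (2 ^ (k + 3) - 4) : A) = (X 0 ^ (2 ^ (k + 2) - 2)) ^ 2 from by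
      rw [← pow_mul]; congr 1; omega]
    exact pderiv_sq _ _
  have hD := congrArg (pderiv (0 : Fin 2)) hfg
  rw [map_add, pderiv_mul, pderiv_mul, DA, DB, Dn, mul_zero, add_zero] at hD
  -- hD : f * Aa k ^ 2 + pderiv 0 f * Aa (k+1) + pderiv 0 g * Bb (k+1) = 0
  have key0 : pderiv (0 : Fin 2) f * Bb k ^ 2
      + (f + X 0 * pderiv (0 : Fin 2) f + X 1 * pderiv (0 : Fin 2) g) * Aa k ^ 2 = 0 := by
    rw [Aa_succ, Bb_succ] at hD
    linear_combination hD
  have key : pderiv (0 : Fin 2) f * Bb k ^ 2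
      = (f + X 0 * pderiv (0 : Fin 2) f + X 1 * pderiv (0 : Fin 2) g) * Aa k ^ 2 :=
    eq_of_add_eq_zero key0
  obtain ⟨w, hw⟩ := DivSq k (Div k) _ _ key
  have hf0 : (w * Bb k ^ 2) * Aa k ^ 2
      = (f + X 0 * (Aa k ^ 2 * w) + X 1 * pderiv (0 : Fin 2) g) * Aa k ^ 2 := by
    rw [hw] at key
    linear_combination key
  have hf1 : w * Bb k ^ 2 = f + X 0 * (Aa k ^ 2 * w) + X 1 * pderiv (0 : Fin 2) g :=
    mul_right_cancel₀ (pow_ne_zero 2 (Aa_ne_zero k)) hf0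
  have hf2 : f + (w * Bb k ^ 2 + X 0 * (Aa k ^ 2 * w) + X 1 * pderiv (0 : Fin 2) g) = 0 := by
    linear_combination hf1 + (f + X 0 * (Aa k ^ 2 * w) + X 1 * pderiv (0:Fin 2) g) * two_eq_zero'
  have hf3 : f = w * Bb k ^ 2 + X 0 * (Aa k ^ 2 * w) + X 1 * pderiv (0 : Fin 2) g :=
    eq_of_add_eq_zero hf2
  rw [hf3] at hfg
  have hpsi := congrArg psi hfg
  simp only [map_add, map_mul, map_pow, psi_X0, psi_X1, psi_Bb, psi_Aa,
    zero_pow, mul_zero, zero_mul, add_zero, zero_add, ne_eq, OfNat.ofNat_ne_zero,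
    not_false_eq_true] at hpsi
  have hXeq : psi w * Polynomial.X ^ (2 ^ (k + 3) - 2)
      = Polynomial.X ^ (2 ^ (k + 3) - 4) := by
    rw [show (2:ℕ) ^ (k + 3) - 2 = 1 + (2 ^ (k + 1) - 1) * 2 + (2 ^ (k + 2) - 1) from by omega,
      pow_add, pow_add, pow_mul]
    linear_combination hpsi
  by_cases hw0 : psi w = 0
  · rw [hw0, zero_mul] at hXeq
    exact pow_ne_zero _ Polynomial.X_ne_zero hXeq.symm
  · have hdeg := congrArg Polynomial.natDegree hXeq
    rw [Polynomial.natDegree_mul hw0 (pow_ne_zero _ Polynomial.X_ne_zero),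
      Polynomial.natDegree_X_pow, Polynomial.natDegree_X_pow] at hdeg
    omega

lemma J_eq (k : ℕ) : Jideal (2 ^ (k + 2) - 4) = Ideal.span ({Aa k, Bb k} : Set A) := by
  have h4 := two_pow_ge k
  obtain ⟨ha, hb, hc⟩ := gGen_pow2 k
  rw [Jideal,
    show 2 ^ (k + 2) - 4 + 1 = 2 ^ (k + 2) - 3 from by omega,
    show 2 ^ (k + 2) - 4 + 2 = 2 ^ (k + 2) - 2 from by omega,
    show 2 ^ (k + 2) - 4 + 3 = 2 ^ (k + 2) - 1 from by omega,
    hc, ha, hb]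
  exact Submodule.span_insert_zero


end CupAux

open CupAux in
/-- For `m ≥ 2` and `n = 2^(m+1) - 4`, the cup-length of
`R = ℤ/2[w2,w3]/J_n` equals `n`: some product of `n` elements of the
augmentation ideal is nonzero, but every product of `n+1` elements of the
augmentation ideal is zero. -/
theorem cupLength_quotient (m : ℕ) (hm : 2 ≤ m) (n : ℕ)
    (hn : n = 2 ^ (m + 1) - 4) :
    (∃ x : Fin n → Rquot n, (∀ i, x i ∈ augIdeal n) ∧ ∏ i, x i ≠ 0) ∧
      ∀ y : Fin (n + 1) → Rquot n, (∀ i, y i ∈ augIdeal n) → ∏ i, y i = 0 := by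
  obtain ⟨k, rfl⟩ : ∃ k, m = k + 2 := ⟨m - 2, by omega⟩
  have hn' : n = 2 ^ ((k + 1) + 2) - 4 := by rw [hn]
  have hJ : Jideal n = Ideal.span ({Aa (k+1), Bb (k+1)} : Set A) := by
    rw [hn']; exact J_eq (k+1)
  have h4 : (4:ℕ) ≤ 2 ^ (k + 3) := two_pow_ge (k + 1)
  have e4 : (2:ℕ) ^ (k + 1 + 3) = 2 * 2 ^ (k + 3) := two_pow_succ (k + 3)
  have e3 : (2:ℕ) ^ (k + 1 + 2) = 2 ^ (k + 3) := rfl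
  constructor
  · refine ⟨fun _ => Ideal.Quotient.mk (Jideal n) (X 0), fun i => ?_, ?_⟩
    · exact Ideal.subset_span (Set.mem_insert _ _)
    · rw [Finset.prod_const, Finset.card_univ, Fintype.card_fin, ← map_pow]
      intro h0
      rw [Ideal.Quotient.eq_zero_iff_mem, hJ] at h0
      rw [hn'] at h0
      exact not_mem_span_pow k h0
  · intro y hy
    have hlift : ∀ i : Fin (n + 1), ∃ cd : A × A,
        Ideal.Quotient.mk (Jideal n) (cd.1 * X 0 + cd.2 * X 1) = y i := by
      intro i
      have hyi := hy i
      rw [augIdeal] at hyi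
      obtain ⟨α, β, hαβ⟩ := Ideal.mem_span_pair.mp hyi
      obtain ⟨c, hc⟩ := Ideal.Quotient.mk_surjective α
      obtain ⟨d, hd⟩ := Ideal.Quotient.mk_surjective β
      exact ⟨(c, d), by rw [map_add, map_mul, map_mul, hc, hd, hαβ]⟩
    choose cd hcd using hlift
    have hprod : ∏ i, y i
        = Ideal.Quotient.mk (Jideal n) (∏ i, ((cd i).1 * X 0 + (cd i).2 * X 1)) := by
      rw [map_prod]
      exact (Finset.prod_congr rfl (fun i _ => (hcd i))).symm
    rw [hprod, Ideal.Quotient.eq_zero_iff_mem, hJ]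
    have main : ∀ t : Finset (Fin (n + 1)), ∀ i j : ℕ, i + j + t.card = n + 1 →
        (X 0 ^ i * X 1 ^ j : A) * ∏ l ∈ t, ((cd l).1 * X 0 + (cd l).2 * X 1)
          ∈ Ideal.span ({Aa (k+1), Bb (k+1)} : Set A) := by
      intro t
      induction t using Finset.induction_on with
      | empty =>
        intro i j hij
        rw [Finset.prod_empty, mul_one]
        apply mem_span_mono (k+1) i j
        rw [Finset.card_empty] at hij
        omega
      | insert _ _ hnotin ih =>
        rename_i a t
        intro i j hij
        rw [Finset.card_insert_of_notMem hnotin] at hij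
        rw [Finset.prod_insert hnotin]
        have hrew : (X 0 ^ i * X 1 ^ j : A) *
            (((cd a).1 * X 0 + (cd a).2 * X 1) * ∏ l ∈ t, ((cd l).1 * X 0 + (cd l).2 * X 1))
            = (cd a).1 * ((X 0 ^ (i+1) * X 1 ^ j) * ∏ l ∈ t, ((cd l).1 * X 0 + (cd l).2 * X 1))
              + (cd a).2 * ((X 0 ^ i * X 1 ^ (j+1)) * ∏ l ∈ t, ((cd l).1 * X 0 + (cd l).2 * X 1)) := by
          ring
        rw [hrew]
        exact Ideal.add_mem _
          (Ideal.mul_mem_left _ _ (ih (i+1) j (by omega)))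
          (Ideal.mul_mem_left _ _ (ih i (j+1) (by omega)))
    have hfin := main Finset.univ 0 0 (by rw [Finset.card_univ, Fintype.card_fin]; omega)
    simpa using hfin
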